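/- Let M ≥ 1, let h₁, …, h_M > 0, P > 0, σ² > 0, λ > 0. Then the maximum over (α₁, …, α_M) ∈ [0,1]^M of F(α₁,…,α_M) = log(1 + (Σ_{m=1}^M α_m h_m P)/σ²) + λ·Σ_{m=1}^M (1 − α_m) h_m P equals the maximum over α ∈ [0,1] of G(α) = log(1 + α·(Σ_{m=1}^M h_m) P/σ²) + λ·(1 − α)·(Σ_{m=1}^M h_m) P. -/

import Mathlib

open Real Set

theorem stmt8 (M : ℕ) (hM : 1 ≤ M) (h : Fin M → ℝ) (P σ2 lam : ℝ)
    (hh : ∀ m, 0 < h m) (hP : 0 < P) (hσ : 0 < σ2) (hlam : 0 < lam) :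
    sSup ((fun a : Fin M → ℝ =>
        Real.log (1 + (∑ m, a m * h m * P) / σ2) + lam * ∑ m, (1 - a m) * h m * P) ''
      Set.Icc 0 1) =
    sSup ((fun α : ℝ =>
        Real.log (1 + α * (∑ m, h m) * P / σ2) + lam * (1 - α) * (∑ m, h m) * P) ''
      Set.Icc 0 1) := by
  have hne : (Finset.univ : Finset (Fin M)).Nonempty := by
    haveI : NeZero M := ⟨by omega⟩
    exact Finset.univ_nonempty
  have hS : 0 < ∑ m, h m := Finset.sum_pos (fun m _ => hh m) hne
  congr 1
  ext x
  constructor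
  · rintro ⟨a, ⟨ha0, ha1⟩, rfl⟩
    refine ⟨(∑ m, a m * h m) / (∑ m, h m), ⟨?_, ?_⟩, ?_⟩
    · apply div_nonneg _ hS.le
      exact Finset.sum_nonneg fun m _ => mul_nonneg (ha0 m) (hh m).le
    · rw [div_le_one hS]
      apply Finset.sum_le_sum
      intro m _
      nth_rewrite 2 [← one_mul (h m)]
      exact mul_le_mul_of_nonneg_right (ha1 m) (hh m).le
    · have e1 : (∑ m, a m * h m) / (∑ m, h m) * (∑ m, h m) * P
          = ∑ m, a m * h m * P := by
        rw [div_mul_cancel₀ _ hS.ne', Finset.sum_mul]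
      have e2 : (1 - (∑ m, a m * h m) / (∑ m, h m)) * (∑ m, h m) * P
          = ∑ m, (1 - a m) * h m * P := by
        field_simp
        rw [← Finset.sum_sub_distrib, Finset.sum_mul]
        apply Finset.sum_congr rfl
        intro m _; ring
      dsimp only
      rw [e1]
      linear_combination lam * e2
  · rintro ⟨α, ⟨h0, h1⟩, rfl⟩
    refine ⟨fun _ => α, ⟨fun m => h0, fun m => h1⟩, ?_⟩
    have e1 : ∑ m, α * h m * P = α * (∑ m, h m) * P := by
      rw [← Finset.sum_mul, ← Finset.mul_sum]
    have e2 : ∑ m, (1 - α) * h m * P = (1 - α) * (∑ m, h m) * P := by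
      rw [← Finset.sum_mul, ← Finset.mul_sum]
    dsimp only
    rw [e1]
    linear_combination lam * e2
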